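/- Special case of the inner-approximation theorem for n = r (whole co-domain): if f : D ⊆ ℝ^m → ℝ^n is a C¹ submersion (derivative surjective at every point of D), u ⊆ D is a compact box, Y ⊆ ℝ^n is a box with Y ∩ f(∂u) = ∅ and f(ũ) ∈ Y for some ũ ∈ u, then Y ⊆ f(u); in particular Y is contained in the range of f. -/

import Mathlib

/-- Special case `n = r`: for a C¹ submersion `f : D ⊆ ℝ^m → ℝ^n`, a compact box
`u ⊆ D` and a box `Y` with `Y ∩ f(∂u) = ∅` and `f(u0) ∈ Y` for some `u0 ∈ u`, one has
`Y ⊆ f(u)`. -/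
theorem box_subset_range_submersion {m n : ℕ}
    (D : Set (Fin m → ℝ)) (hD : IsOpen D)
    (f : (Fin m → ℝ) → (Fin n → ℝ)) (hf : ContDiffOn ℝ 1 f D)
    (hrank : ∀ x ∈ D, Function.Surjective (fderiv ℝ f x))
    (a b : Fin m → ℝ) (hab : ∀ i, a i ≤ b i)
    (u : Set (Fin m → ℝ)) (hu : u = Set.univ.pi fun i => Set.Icc (a i) (b i))
    (huD : u ⊆ D)
    (c d : Fin n → ℝ) (hcd : ∀ i, c i ≤ d i)
    (Y : Set (Fin n → ℝ)) (hY : Y = Set.univ.pi fun i => Set.Icc (c i) (d i))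
    (hdisj : Y ∩ f '' (frontier u) = ∅)
    (hmem : ∃ u0 ∈ u, f u0 ∈ Y) :
    Y ⊆ f '' u := by
  -- u is compact and closed
  have hu_compact : IsCompact u := by
    rw [hu]; exact isCompact_univ_pi fun i => isCompact_Icc
  have hu_closed : IsClosed u := by
    rw [hu]; exact isClosed_set_pi fun i _ => isClosed_Icc
  -- K = f '' u is compact, hence closed
  have hK_compact : IsCompact (f '' u) :=
    hu_compact.image_of_continuousOn ((hf.continuousOn).mono huD)
  have hK_closed : IsClosed (f '' u) := hK_compact.isClosed
  -- Y is preconnected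
  have hY_pre : IsPreconnected Y := by
    rw [hY]
    exact (convex_pi fun i _ => convex_Icc (c i) (d i)).isPreconnected
  -- every point of u mapping into Y lies in the interior of u
  have hint : ∀ x ∈ u, f x ∈ Y → x ∈ interior u := by
    intro x hx hfx
    by_contra hxi
    have hxf : x ∈ frontier u := by
      rw [hu_closed.frontier_eq]; exact ⟨hx, hxi⟩
    have : f x ∈ Y ∩ f '' frontier u := ⟨hfx, ⟨x, hxf, rfl⟩⟩
    rw [hdisj] at this
    exact this
  -- local openness near interior points
  have hopen : ∀ y ∈ Y ∩ f '' u, y ∈ interior (f '' interior u) := by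
    rintro y ⟨hyY, x, hxu, rfl⟩
    have hxint : x ∈ interior u := hint x hxu hyY
    have hxD : x ∈ D := huD hxu
    have hcd : ContDiffAt ℝ 1 f x := hf.contDiffAt (hD.mem_nhds hxD)
    have hstrict : HasStrictFDerivAt f (fderiv ℝ f x) x :=
      hcd.hasStrictFDerivAt one_ne_zero
    have hsurj : LinearMap.range (fderiv ℝ f x : (Fin m → ℝ) →ₗ[ℝ] (Fin n → ℝ)) = ⊤ :=
      by rw [LinearMap.range_eq_top]; exact hrank x hxD
    have hmap : Filter.map f (nhds x) = nhds (f x) :=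
      hstrict.map_nhds_eq_of_surj hsurj
    have hmem' : f '' interior u ∈ nhds (f x) := by
      rw [← hmap]
      exact Filter.image_mem_map (isOpen_interior.mem_nhds hxint)
    exact mem_interior_iff_mem_nhds.2 hmem'
  -- connectedness argument
  intro y hyY
  by_contra hyK
  obtain ⟨u0, hu0, hfu0⟩ := hmem
  have hne : (Y ∩ interior (f '' interior u)).Nonempty :=
    ⟨f u0, hfu0, hopen _ ⟨hfu0, u0, hu0, rfl⟩⟩
  have hcover : Y ⊆ (f '' u)ᶜ ∪ interior (f '' interior u) := by
    intro z hz
    by_cases hzK : z ∈ f '' u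
    · exact Or.inr (hopen z ⟨hz, hzK⟩)
    · exact Or.inl hzK
  have := hY_pre _ _ hK_closed.isOpen_compl isOpen_interior hcover
    ⟨y, hyY, hyK⟩ hne
  obtain ⟨z, hzY, hz1, hz2⟩ := this
  exact hz1 (Set.image_mono (f := f) interior_subset (interior_subset hz2))
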